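/- The EYE penalty eye(θ) = ‖(1−r)⊙θ‖₁ + √(‖(1−r)⊙θ‖₁² + ‖r⊙θ‖₂²), where r ∈ {0,1}^d is a fixed indicator vector and ⊙ denotes elementwise product, is a norm on ℝ^d. -/

import Mathlib

noncomputable def eye {d : ℕ} (r θ : Fin d → ℝ) : ℝ :=
  (∑ i, (1 - r i) * |θ i|) +
    Real.sqrt ((∑ i, (1 - r i) * |θ i|) ^ 2 + ∑ i, (r i * θ i) ^ 2)

open Finset in
lemma eye_sqrt2tri (a b c d : ℝ) :
    Real.sqrt ((a + c) ^ 2 + (b + d) ^ 2) ≤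
      Real.sqrt (a ^ 2 + b ^ 2) + Real.sqrt (c ^ 2 + d ^ 2) := by
  have h := norm_add_le (⟨a, b⟩ : ℂ) ⟨c, d⟩
  have he : (⟨a, b⟩ + ⟨c, d⟩ : ℂ) = ⟨a + c, b + d⟩ := by
    apply Complex.ext <;> simp
  rw [he] at h
  simpa [Complex.norm_def, Complex.normSq_mk, sq] using h

lemma eye_minkowski {d : ℕ} (x y : Fin d → ℝ) :
    Real.sqrt (∑ i, (x i + y i) ^ 2) ≤
      Real.sqrt (∑ i, x i ^ 2) + Real.sqrt (∑ i, y i ^ 2) := by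
  have h := norm_add_le ((WithLp.equiv 2 (Fin d → ℝ)).symm x)
    ((WithLp.equiv 2 (Fin d → ℝ)).symm y)
  simpa [EuclideanSpace.norm_eq, sq_abs, PiLp.toLp_apply] using h

theorem eye_is_norm {d : ℕ} (r : Fin d → ℝ) (hr : ∀ i, r i = 0 ∨ r i = 1) :
    (∀ θ : Fin d → ℝ, 0 ≤ eye r θ) ∧
    (∀ θ : Fin d → ℝ, eye r θ = 0 ↔ θ = 0) ∧
    (∀ (t : ℝ) (θ : Fin d → ℝ), eye r (t • θ) = |t| * eye r θ) ∧
    (∀ θ φ : Fin d → ℝ, eye r (θ + φ) ≤ eye r θ + eye r φ) := by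
  have hr1 : ∀ i, 0 ≤ 1 - r i := by
    intro i; rcases hr i with h | h <;> rw [h] <;> norm_num
  have hA0 : ∀ θ : Fin d → ℝ, 0 ≤ ∑ i, (1 - r i) * |θ i| := fun θ =>
    Finset.sum_nonneg fun i _ => mul_nonneg (hr1 i) (abs_nonneg _)
  have hB0 : ∀ θ : Fin d → ℝ, 0 ≤ ∑ i, (r i * θ i) ^ 2 := fun θ =>
    Finset.sum_nonneg fun i _ => sq_nonneg _
  refine ⟨?_, ?_, ?_, ?_⟩
  · intro θ
    exact add_nonneg (hA0 θ) (Real.sqrt_nonneg _)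
  · intro θ
    constructor
    · intro h
      have hs : Real.sqrt ((∑ i, (1 - r i) * |θ i|) ^ 2 + ∑ i, (r i * θ i) ^ 2) = 0 := by
        have := hA0 θ
        have hsn := Real.sqrt_nonneg ((∑ i, (1 - r i) * |θ i|) ^ 2 + ∑ i, (r i * θ i) ^ 2)
        unfold eye at h; linarith
      have hA : (∑ i, (1 - r i) * |θ i|) = 0 := by
        have := hA0 θ
        have hsn := Real.sqrt_nonneg ((∑ i, (1 - r i) * |θ i|) ^ 2 + ∑ i, (r i * θ i) ^ 2)
        unfold eye at h; linarith
      have hinner : (∑ i, (1 - r i) * |θ i|) ^ 2 + ∑ i, (r i * θ i) ^ 2 = 0 := by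
        exact le_antisymm (Real.sqrt_eq_zero'.mp hs)
          (add_nonneg (sq_nonneg _) (hB0 θ))
      have hB : (∑ i, (r i * θ i) ^ 2) = 0 := by nlinarith [sq_nonneg (∑ i, (1 - r i) * |θ i|)]
      have hAe : ∀ i ∈ Finset.univ, (1 - r i) * |θ i| = 0 :=
        (Finset.sum_eq_zero_iff_of_nonneg
          (fun i _ => mul_nonneg (hr1 i) (abs_nonneg _))).mp hA
      have hBe : ∀ i ∈ Finset.univ, (r i * θ i) ^ 2 = 0 :=
        (Finset.sum_eq_zero_iff_of_nonneg (fun i _ => sq_nonneg _)).mp hB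
      funext i
      rcases hr i with h0 | h1
      · have := hAe i (Finset.mem_univ i)
        rw [h0] at this
        simpa using abs_eq_zero.mp (by linarith)
      · have := hBe i (Finset.mem_univ i)
        rw [h1] at this
        have : θ i = 0 := by nlinarith
        simpa using this
    · intro h; subst h; simp [eye]
  · intro t θ
    have hA : (∑ i, (1 - r i) * |t * θ i|) = |t| * ∑ i, (1 - r i) * |θ i| := by
      rw [Finset.mul_sum]
      exact Finset.sum_congr rfl fun i _ => by rw [abs_mul]; ring
    have hB : (∑ i, (r i * (t * θ i)) ^ 2) = t ^ 2 * ∑ i, (r i * θ i) ^ 2 := by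
      rw [Finset.mul_sum]
      exact Finset.sum_congr rfl fun i _ => by ring
    simp only [eye, Pi.smul_apply, smul_eq_mul, hA, hB]
    rw [mul_pow, sq_abs]
    rw [show t ^ 2 * (∑ i, (1 - r i) * |θ i|) ^ 2 + t ^ 2 * ∑ i, (r i * θ i) ^ 2
        = t ^ 2 * ((∑ i, (1 - r i) * |θ i|) ^ 2 + ∑ i, (r i * θ i) ^ 2) by ring,
      Real.sqrt_mul (sq_nonneg t), Real.sqrt_sq_eq_abs]
    ring
  · intro θ φ
    set A1 := ∑ i, (1 - r i) * |θ i|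
    set A2 := ∑ i, (1 - r i) * |φ i|
    set B1 := ∑ i, (r i * θ i) ^ 2
    set B2 := ∑ i, (r i * φ i) ^ 2
    have hAadd : (∑ i, (1 - r i) * |(θ + φ) i|) ≤ A1 + A2 := by
      rw [← Finset.sum_add_distrib]
      refine Finset.sum_le_sum fun i _ => ?_
      have : |(θ + φ) i| ≤ |θ i| + |φ i| := by simpa using abs_add_le (θ i) (φ i)
      nlinarith [hr1 i, abs_nonneg (θ i), abs_nonneg (φ i)]
    have hBadd : Real.sqrt (∑ i, (r i * (θ + φ) i) ^ 2) ≤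
        Real.sqrt B1 + Real.sqrt B2 := by
      have h := eye_minkowski (fun i => r i * θ i) (fun i => r i * φ i)
      have he : (∑ i, (r i * (θ + φ) i) ^ 2) = ∑ i, (r i * θ i + r i * φ i) ^ 2 :=
        Finset.sum_congr rfl fun i _ => by simp [Pi.add_apply]; ring
      rw [he]; exact h
    have hB3 : (∑ i, (r i * (θ + φ) i) ^ 2) ≤ (Real.sqrt B1 + Real.sqrt B2) ^ 2 := by
      have h0 : 0 ≤ ∑ i, (r i * (θ + φ) i) ^ 2 :=
        Finset.sum_nonneg fun i _ => sq_nonneg _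
      nlinarith [Real.sq_sqrt h0, Real.sqrt_nonneg (∑ i, (r i * (θ + φ) i) ^ 2)]
    have hA3 : (∑ i, (1 - r i) * |(θ + φ) i|) ^ 2 ≤ (A1 + A2) ^ 2 := by
      have h0 : 0 ≤ ∑ i, (1 - r i) * |(θ + φ) i| := hA0 _
      nlinarith
    have hsq : Real.sqrt ((∑ i, (1 - r i) * |(θ + φ) i|) ^ 2 + ∑ i, (r i * (θ + φ) i) ^ 2)
        ≤ Real.sqrt ((A1 + A2) ^ 2 + (Real.sqrt B1 + Real.sqrt B2) ^ 2) :=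
      Real.sqrt_le_sqrt (by linarith)
    have htri := eye_sqrt2tri A1 (Real.sqrt B1) A2 (Real.sqrt B2)
    rw [Real.sq_sqrt (hB0 θ), Real.sq_sqrt (hB0 φ)] at htri
    show (∑ i, (1 - r i) * |(θ + φ) i|) + _ ≤ _
    calc (∑ i, (1 - r i) * |(θ + φ) i|) +
          Real.sqrt ((∑ i, (1 - r i) * |(θ + φ) i|) ^ 2 + ∑ i, (r i * (θ + φ) i) ^ 2)
        ≤ (A1 + A2) + Real.sqrt ((A1 + A2) ^ 2 + (Real.sqrt B1 + Real.sqrt B2) ^ 2) := by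
          linarith
      _ ≤ (A1 + A2) + (Real.sqrt (A1 ^ 2 + B1) + Real.sqrt (A2 ^ 2 + B2)) := by linarith
      _ = (A1 + Real.sqrt (A1 ^ 2 + B1)) + (A2 + Real.sqrt (A2 ^ 2 + B2)) := by ring
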